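/- Let $(Y,y)$ be a proper, geodesic, nonbranching, noncompact pointed metric space such that every geodesic segment extends within minimizers appropriately (as available in Ricci limit spaces). Define $f(R)=\#\,\partial B_R(y)\in\mathbb{N}\cup\{\infty\}$ for $R>0$, together with the splitting property: if $Y$ contains a line then $Y$ is isometric to $\mathbb{R}\times N$ for some metric space $N$. Then exactly one of the following holds: (1) $f\equiv 1$ and $(Y,y)\cong([0,\infty),0)$; (2) there is $a>0$ with $f=2$ on $(0,a]$, $f=1$ on $(a,\infty)$, and $(Y,y)\cong([0,\infty),a)$; (3) $f\equiv 2$ and $(Y,y)\cong(\mathbb{R},0)$; (4) $f\equiv\infty$. -/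

import Mathlib

open Set

namespace Stmt15

variable {Y : Type*} [MetricSpace Y]

def IsG (c : ℝ → Y) (T : ℝ) : Prop :=
  ∀ s ∈ Icc (0:ℝ) T, ∀ t ∈ Icc (0:ℝ) T, dist (c s) (c t) = |s - t|

def sph (y : Y) (R : ℝ) : Set Y := {x | dist x y = R}

theorem IsG.mono {c : ℝ → Y} {T T' : ℝ} (h : IsG c T) (hT : T' ≤ T) : IsG c T' :=
  fun s hs t ht => h s ⟨hs.1, hs.2.trans hT⟩ t ⟨ht.1, ht.2.trans hT⟩

theorem IsG.rev {c : ℝ → Y} {T : ℝ} (h : IsG c T) : IsG (fun t => c (T - t)) T := by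
  intro s hs t ht
  have := h (T - s) ⟨by linarith [hs.2], by linarith [hs.1]⟩ (T - t)
    ⟨by linarith [ht.2], by linarith [ht.1]⟩
  rw [this]
  rw [abs_sub_comm]
  ring_nf

theorem IsG.dist_eq {c : ℝ → Y} {T : ℝ} (h : IsG c T) {s t : ℝ} (h0 : 0 ≤ s) (hst : s ≤ t)
    (hT : t ≤ T) : dist (c s) (c t) = t - s := by
  rw [h s ⟨h0, le_trans hst hT⟩ t ⟨le_trans h0 hst, hT⟩, abs_sub_comm, abs_of_nonneg (by linarith)]

theorem IsG.continuousOn {c : ℝ → Y} {T : ℝ} (h : IsG c T) :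
    ContinuousOn c (Icc 0 T) := by
  have : LipschitzOnWith 1 c (Icc 0 T) := by
    intro s hs t ht
    rw [edist_dist, edist_dist, h s hs t ht]
    simp [Real.dist_eq, ENNReal.coe_one, one_mul]
  exact this.continuousOn


/-- Two geodesics from the same point through a common interior point coincide. -/
theorem geo_unique {Y : Type*} [MetricSpace Y]
    (hnb : ∀ (T : ℝ) (c₁ c₂ : ℝ → Y), IsG c₁ T → IsG c₂ T →
      (∃ ε > (0:ℝ), ∀ t ∈ Icc (0:ℝ) ε, c₁ t = c₂ t) →
      ∀ t ∈ Icc (0:ℝ) T, c₁ t = c₂ t)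
    {g h : ℝ → Y} {u R R' : ℝ} (hg : IsG g R) (hh : IsG h R')
    (h00 : g 0 = h 0) (huu : g u = h u) (h0u : 0 < u) (huR : u < R) (hRR' : R ≤ R') :
    ∀ t ∈ Icc (0:ℝ) R, g t = h t := by
  have hR0 : 0 ≤ R := by linarith
  set c : ℝ → Y := fun t => if t ≤ u then h t else g t with hc
  have hhR : IsG h R := hh.mono hRR'
  have hcG : IsG c R := by
    have key : ∀ s t, 0 ≤ s → s ≤ t → t ≤ R → dist (c s) (c t) = t - s := by
      intro s t h0 hst htR
      by_cases ht : t ≤ u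
      · simp only [hc, if_pos (le_trans hst ht), if_pos ht]
        exact hhR.dist_eq h0 hst htR
      · push_neg at ht
        by_cases hs : s ≤ u
        · simp only [hc, if_pos hs, if_neg (not_le.2 ht)]
          have hub : dist (h s) (g t) ≤ t - s := by
            calc dist (h s) (g t) ≤ dist (h s) (h u) + dist (g u) (g t) := by
                  rw [huu]; exact dist_triangle _ _ _
              _ ≤ (u - s) + (t - u) := by
                  rw [hhR.dist_eq h0 hs (by linarith), hg.dist_eq (by linarith) ht.le htR]
              _ = t - s := by ring
          have hlb : t - s ≤ dist (h s) (g t) := by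
            have h1 : dist (g 0) (g t) ≤ dist (g 0) (h s) + dist (h s) (g t) :=
              dist_triangle _ _ _
            rw [hg.dist_eq le_rfl (by linarith) htR, h00, hhR.dist_eq le_rfl h0 (by linarith)]
              at h1
            linarith
          linarith
        · push_neg at hs
          simp only [hc, if_neg (not_le.2 hs), if_neg (not_le.2 ht)]
          exact hg.dist_eq h0 hst htR
    intro s hs t ht
    rcases le_total s t with hle | hle
    · rw [key s t hs.1 hle ht.2, abs_sub_comm, abs_of_nonneg (by linarith)]
    · rw [dist_comm, key t s ht.1 hle hs.2, abs_of_nonneg (by linarith)]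
  -- c agrees with h near 0, hence on [0,R]; gives g = h on [u, R]
  have hch : ∀ t ∈ Icc (0:ℝ) R, c t = h t := by
    refine hnb R c h hcG hhR ⟨u, h0u, fun t ht => ?_⟩
    simp only [hc, if_pos ht.2]
  -- reversed: c agrees with g near 0 (from the far end), hence everywhere
  have hcg : ∀ t ∈ Icc (0:ℝ) R, c (R - t) = g (R - t) := by
    refine hnb R (fun t => c (R - t)) (fun t => g (R - t)) hcG.rev hg.rev
      ⟨R - u, by linarith, fun t ht => ?_⟩
    have : u ≤ R - t := by linarith [ht.2]
    by_cases he : R - t ≤ u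
    · have : R - t = u := le_antisymm he this
      simp only [hc, this, if_pos le_rfl, huu.symm]
    · simp only [hc, if_neg he]
  intro t ht
  by_cases htu : t ≤ u
  · have h2 := hcg (R - t) ⟨by linarith [ht.2], by linarith [ht.1]⟩
    have h3 : R - (R - t) = t := by ring
    rw [h3] at h2
    have h4 : c t = h t := hch t ht
    simp only [hc, if_pos htu] at h2
    rw [← h2]
  · push_neg at htu
    have h4 : c t = h t := hch t ht
    simp only [hc, if_neg (not_le.2 htu)] at h4
    rw [h4]


section
variable [ProperSpace Y] (y : Y)

theorem unbounded (hnc : ¬ CompactSpace Y) : ∀ C : ℝ, ∃ z : Y, C < dist z y := by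
  intro C
  by_contra hco
  push_neg at hco
  apply hnc
  rw [← isCompact_univ_iff]
  exact (isCompact_closedBall y C).of_isClosed_subset isClosed_univ
    (fun z _ => Metric.mem_closedBall.2 (hco z))

theorem sph_nonempty (hnc : ¬ CompactSpace Y)
    (hgeo : ∀ x z : Y, ∃ c : ℝ → Y, c 0 = x ∧ c (dist x z) = z ∧ IsG c (dist x z)) :
    ∀ u : ℝ, 0 ≤ u → ∃ x : Y, dist x y = u := by
  intro u hu
  obtain ⟨z, hz⟩ := unbounded y hnc u
  obtain ⟨c, hc0, -, hcG⟩ := hgeo y z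
  refine ⟨c u, ?_⟩
  have hu2 : u ≤ dist y z := by rw [dist_comm]; exact hz.le
  have := hcG 0 ⟨le_rfl, dist_nonneg⟩ u ⟨hu, hu2⟩
  rw [hc0] at this
  rw [dist_comm, this]
  simp [abs_of_nonneg hu]

end

section
variable [ProperSpace Y] (y : Y)
variable (hgeo : ∀ x z : Y, ∃ c : ℝ → Y, c 0 = x ∧ c (dist x z) = z ∧ IsG c (dist x z))
variable (hnb : ∀ (T : ℝ) (c₁ c₂ : ℝ → Y), IsG c₁ T → IsG c₂ T →
      (∃ ε > (0:ℝ), ∀ t ∈ Icc (0:ℝ) ε, c₁ t = c₂ t) →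
      ∀ t ∈ Icc (0:ℝ) T, c₁ t = c₂ t)
variable (hnc : ¬ CompactSpace Y)

include hgeo hnb hnc in
theorem exists_structure {R₀ : ℝ} (hR₀ : 0 < R₀) (hfin : (sph y R₀).Finite) :
    ∃ (N₀ : ℝ) (k : ℕ) (g : Y → ℝ → Y),
      R₀ ≤ N₀ ∧ 1 ≤ k ∧
      (sph y N₀).Finite ∧
      (∀ u, N₀ ≤ u → (sph y u).Finite ∧ (sph y u).ncard = k) ∧
      (∀ x ∈ sph y N₀, g x 0 = y) ∧
      (∀ x ∈ sph y N₀, g x N₀ = x) ∧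
      (∀ x ∈ sph y N₀, ∀ s t : ℝ, 0 ≤ s → 0 ≤ t → dist (g x s) (g x t) = |s - t|) ∧
      (∀ x ∈ sph y N₀, ∀ x' ∈ sph y N₀, ∀ u, N₀ ≤ u → g x u = g x' u → x = x') ∧
      (∀ u, N₀ ≤ u → ∀ w ∈ sph y u, ∃ x ∈ sph y N₀, w = g x u) := by
  classical
  -- injections between spheres
  have hmono : ∀ R R' : ℝ, 0 < R' → R' < R →
      ∃ f : Y → Y, MapsTo f (sph y R) (sph y R') ∧ InjOn f (sph y R) ∧
        ∀ x ∈ sph y R, ∃ c : ℝ → Y, c 0 = y ∧ IsG c R ∧ c R' = f x ∧ c R = x := by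
    intro R R' hR' hlt
    have hR : 0 < R := hR'.trans hlt
    set f : Y → Y := fun x => Classical.choose (hgeo y x) R' with hfdef
    have hprop : ∀ x ∈ sph y R, ∃ c : ℝ → Y, c 0 = y ∧ IsG c R ∧ c R' = f x ∧ c R = x := by
      intro x hx
      obtain ⟨hc0, hcd, hcG⟩ := Classical.choose_spec (hgeo y x)
      have hd : dist y x = R := by rw [dist_comm]; exact hx
      refine ⟨Classical.choose (hgeo y x), hc0, by rw [← hd]; exact hcG, rfl, by rw [← hd]; exact hcd⟩
    have hmaps : MapsTo f (sph y R) (sph y R') := by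
      intro x hx
      obtain ⟨c, hc0, hcG, hcR', -⟩ := hprop x hx
      have : dist (c 0) (c R') = R' - 0 := hcG.dist_eq le_rfl hR'.le (by linarith)
      rw [hc0, hcR'] at this
      show dist (f x) y = R'
      rw [dist_comm, this]; ring
    have hinj : InjOn f (sph y R) := by
      intro x₁ hx₁ x₂ hx₂ hf
      obtain ⟨c₁, hc₁0, hc₁G, hc₁R', hc₁R⟩ := hprop x₁ hx₁
      obtain ⟨c₂, hc₂0, hc₂G, hc₂R', hc₂R⟩ := hprop x₂ hx₂
      have := geo_unique hnb hc₁G hc₂G (by rw [hc₁0, hc₂0])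
        (by rw [hc₁R', hc₂R', hf]) hR' hlt le_rfl R ⟨hR.le, le_rfl⟩
      rw [← hc₁R, ← hc₂R, this]
    exact ⟨f, hmaps, hinj, hprop⟩
  have hfin' : ∀ u, R₀ ≤ u → (sph y u).Finite := by
    intro u hu
    rcases eq_or_lt_of_le hu with h | h
    · rwa [← h]
    · obtain ⟨f, hmaps, hinj, -⟩ := hmono u R₀ hR₀ h
      exact Set.Finite.of_finite_image (hfin.subset hmaps.image_subset) hinj
  have hncard_mono : ∀ R R' : ℝ, R₀ ≤ R' → R' < R → (sph y R).ncard ≤ (sph y R').ncard := by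
    intro R R' hR' hlt
    obtain ⟨f, hmaps, hinj, -⟩ := hmono R R' (hR₀.trans_le hR') hlt
    calc (sph y R).ncard = (f '' sph y R).ncard := (Set.ncard_image_of_injOn hinj).symm
      _ ≤ (sph y R').ncard := Set.ncard_le_ncard hmaps.image_subset (hfin' R' hR')
  -- stabilization
  set K : Set ℕ := (fun u => (sph y u).ncard) '' (Ici R₀) with hK
  have hKne : K.Nonempty := ⟨(sph y R₀).ncard, ⟨R₀, mem_Ici.2 le_rfl, rfl⟩⟩
  set k : ℕ := sInf K with hk
  obtain ⟨N₀, hN₀R, hN₀card⟩ : ∃ u ∈ Ici R₀, (sph y u).ncard = k := Nat.sInf_mem hKne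
  have hN₀pos : 0 < N₀ := hR₀.trans_le hN₀R
  have hconst : ∀ u, N₀ ≤ u → (sph y u).Finite ∧ (sph y u).ncard = k := by
    intro u hu
    have hufin : (sph y u).Finite := hfin' u (hN₀R.trans hu)
    refine ⟨hufin, le_antisymm ?_ ?_⟩
    · rcases eq_or_lt_of_le hu with h | h
      · rw [← h, hN₀card]
      · exact (hncard_mono u N₀ hN₀R h).trans_eq hN₀card
    · exact Nat.sInf_le ⟨u, mem_Ici.2 (hN₀R.trans hu), rfl⟩
  have hkpos : 1 ≤ k := by
    obtain ⟨x, hx⟩ := sph_nonempty y hnc hgeo N₀ hN₀pos.le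
    have := (hconst N₀ le_rfl).1
    have h1 : 0 < (sph y N₀).ncard := (Set.ncard_pos this).2 ⟨x, hx⟩
    omega
  -- geodesics of arbitrary length through sphere points
  have hthrough : ∀ x ∈ sph y N₀, ∀ T, N₀ < T → ∃ c : ℝ → Y, c 0 = y ∧ IsG c T ∧ c N₀ = x := by
    intro x hx T hT
    obtain ⟨f, hmaps, hinj, hwit⟩ := hmono T N₀ hN₀pos hT
    have himg : f '' sph y T = sph y N₀ := by
      refine Set.eq_of_subset_of_ncard_le hmaps.image_subset ?_ ((hconst N₀ le_rfl).1)
      rw [Set.ncard_image_of_injOn hinj, (hconst N₀ le_rfl).2, (hconst T hT.le).2]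
    obtain ⟨x', hx', hfx'⟩ := himg.symm.subset hx
    obtain ⟨c, hc0, hcG, hcR', hcR⟩ := hwit x' hx'
    exact ⟨c, hc0, hcG, by rw [hcR', hfx']⟩
  -- uniqueness of geodesics through a point of sph N₀
  have huniq : ∀ x ∈ sph y N₀, ∀ (c c' : ℝ → Y) (T T' : ℝ), N₀ < T → T ≤ T' →
      c 0 = y → c N₀ = x → c' 0 = y → c' N₀ = x → IsG c T → IsG c' T' →
      ∀ t ∈ Icc (0:ℝ) T, c t = c' t := by
    intro x hx c c' T T' hT hTT' hc0 hcN hc'0 hc'N hcG hc'G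
    exact geo_unique hnb hcG hc'G (by rw [hc0, hc'0]) (by rw [hcN, hc'N]) hN₀pos hT hTT'
  -- the ray through x
  have hthrough2 : ∀ x, x ∈ sph y N₀ → ∀ T : ℝ,
      ∃ c : ℝ → Y, c 0 = y ∧ IsG c (max T (N₀ + 1)) ∧ c N₀ = x := by
    intro x hx T
    exact hthrough x hx (max T (N₀ + 1)) (lt_of_lt_of_le (by linarith) (le_max_right _ _))
  set g : Y → ℝ → Y := fun x t =>
    if hx : x ∈ sph y N₀ then Classical.choose (hthrough2 x hx t) t else y
    with hgdef
  have hgeval : ∀ x (hx : x ∈ sph y N₀) (t B : ℝ), 0 ≤ t → N₀ < B → t ≤ B →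
      ∀ (c : ℝ → Y), c 0 = y → IsG c B → c N₀ = x → g x t = c t := by
    intro x hx t B ht hB htB c hc0 hcG hcN
    set M := max t (N₀ + 1) with hM
    have hmax : N₀ < M := lt_of_lt_of_le (by linarith) (le_max_right _ _)
    obtain ⟨hd0, hdG, hdN⟩ := Classical.choose_spec (hthrough2 x hx t)
    set d := Classical.choose (hthrough2 x hx t) with hd
    have hgx : g x t = d t := by rw [hgdef]; simp only [dif_pos hx]; rfl
    have htM : t ≤ M := le_max_left _ _
    rcases le_total M B with hc | hc
    · rw [hgx]
      exact huniq x hx d c M B hmax hc hd0 hdN hc0 hcN hdG hcG t ⟨ht, htM⟩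
    · rw [hgx]
      exact (huniq x hx c d B M hB hc hc0 hcN hd0 hdN hcG hdG t ⟨ht, htB⟩).symm
  have hg0 : ∀ x ∈ sph y N₀, g x 0 = y := by
    intro x hx
    obtain ⟨c, hc0, hcG, hcN⟩ := hthrough x hx (N₀ + 1) (by linarith)
    rw [hgeval x hx 0 (N₀ + 1) le_rfl (by linarith) (by linarith) c hc0 hcG hcN, hc0]
  have hgN : ∀ x ∈ sph y N₀, g x N₀ = x := by
    intro x hx
    obtain ⟨c, hc0, hcG, hcN⟩ := hthrough x hx (N₀ + 1) (by linarith)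
    rw [hgeval x hx N₀ (N₀ + 1) hN₀pos.le (by linarith) (by linarith) c hc0 hcG hcN, hcN]
  have hgiso : ∀ x ∈ sph y N₀, ∀ s t : ℝ, 0 ≤ s → 0 ≤ t → dist (g x s) (g x t) = |s - t| := by
    intro x hx s t hs ht
    set B := max s t + N₀ + 1 with hB
    have hsB : s ≤ B := by
      have := le_max_left s t; linarith
    have htB : t ≤ B := by
      have := le_max_right s t; linarith
    have hNB : N₀ < B := by
      have h1 : 0 ≤ max s t := le_trans hs (le_max_left s t); linarith
    obtain ⟨c, hc0, hcG, hcN⟩ := hthrough x hx B hNB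
    rw [hgeval x hx s B hs hNB hsB c hc0 hcG hcN, hgeval x hx t B ht hNB htB c hc0 hcG hcN]
    exact hcG s ⟨hs, hsB⟩ t ⟨ht, htB⟩
  have hgIsG : ∀ x ∈ sph y N₀, ∀ T : ℝ, IsG (g x) T := by
    intro x hx T s hs t ht
    exact hgiso x hx s t hs.1 ht.1
  have hsep : ∀ x ∈ sph y N₀, ∀ x' ∈ sph y N₀, ∀ u, N₀ ≤ u → g x u = g x' u → x = x' := by
    intro x hx x' hx' u hu hgu
    have h1 := geo_unique hnb (hgIsG x hx (u+1)) (hgIsG x' hx' (u+1))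
      (by rw [hg0 x hx, hg0 x' hx']) hgu (by linarith) (by linarith) le_rfl N₀
      ⟨hN₀pos.le, by linarith⟩
    rw [← hgN x hx, ← hgN x' hx', h1]
  have hdesc : ∀ u, N₀ ≤ u → ∀ w ∈ sph y u, ∃ x ∈ sph y N₀, w = g x u := by
    intro u hu w hw
    have himg2 : (fun x => g x u) '' sph y N₀ = sph y u := by
      have hsub : (fun x => g x u) '' sph y N₀ ⊆ sph y u := by
        rintro - ⟨x, hx, rfl⟩
        show dist (g x u) y = u
        have := hgiso x hx u 0 (hN₀pos.le.trans hu) le_rfl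
        rw [hg0 x hx] at this
        rw [this, sub_zero, abs_of_nonneg (hN₀pos.le.trans hu)]
      refine Set.eq_of_subset_of_ncard_le hsub ?_ ((hconst u hu).1)
      rw [Set.ncard_image_of_injOn (fun x hx x' hx' h => hsep x hx x' hx' u hu h),
        (hconst N₀ le_rfl).2, (hconst u hu).2]
    obtain ⟨x, hx, hxw⟩ := himg2.symm.subset hw
    exact ⟨x, hx, hxw.symm⟩
  exact ⟨N₀, k, g, hN₀R, hkpos, (hconst N₀ le_rfl).1, hconst, hg0, hgN, hgiso, hsep, hdesc⟩

end

section
variable (y : Y)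
variable (hgeo : ∀ x z : Y, ∃ c : ℝ → Y, c 0 = x ∧ c (dist x z) = z ∧ IsG c (dist x z))
variable (hnb : ∀ (T : ℝ) (c₁ c₂ : ℝ → Y), IsG c₁ T → IsG c₂ T →
      (∃ ε > (0:ℝ), ∀ t ∈ Icc (0:ℝ) ε, c₁ t = c₂ t) →
      ∀ t ∈ Icc (0:ℝ) T, c₁ t = c₂ t)

include hgeo hnb in
theorem branch_one {N₀ : ℝ} (hN₀ : 0 < N₀) (γ : ℝ → Y)
    (hγ0 : γ 0 = y)
    (hγiso : ∀ s t : ℝ, 0 ≤ s → 0 ≤ t → dist (γ s) (γ t) = |s - t|)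
    (hsingle : ∀ u, N₀ ≤ u → ∀ w, dist w y = u → w = γ u) :
    ∃ φ : Y → ℝ, (∀ z w : Y, dist (φ z) (φ w) = dist z w) ∧ φ y = 0 ∧
      ∀ s : ℝ, 0 ≤ s → φ (γ s) = s := by
  classical
  have hγy : ∀ s : ℝ, 0 ≤ s → dist (γ s) y = s := by
    intro s hs
    have := hγiso s 0 hs le_rfl
    rw [hγ0] at this
    rw [this, sub_zero, abs_of_nonneg hs]
  -- crossing lemma
  have L1 : ∀ z : Y, ∀ T u : ℝ, N₀ ≤ u → dist z y ≤ u → u ≤ T →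
      ∀ c : ℝ → Y, c 0 = z → c (dist z (γ T)) = γ T → IsG c (dist z (γ T)) →
      ∃ t, 0 ≤ t ∧ t ≤ dist z (γ T) ∧ c t = γ u ∧ t = dist z (γ u) ∧
        dist z (γ T) - t = T - u := by
    intro z T u hNu hzu huT c hc0 hcL hcG
    set L := dist z (γ T) with hL
    have hT0 : 0 ≤ T := le_trans (le_trans hN₀.le hNu) huT
    have hu0 : 0 ≤ u := le_trans hN₀.le hNu
    have hDL : dist (c L) y = T := by rw [hcL]; exact hγy T hT0
    have hD0 : dist (c 0) y = dist z y := by rw [hc0]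
    have hcont : ContinuousOn (fun t => dist (c t) y) (Icc 0 L) :=
      continuous_dist.comp_continuousOn (hcG.continuousOn.prodMk continuousOn_const)
    have hivt := intermediate_value_Icc (dist_nonneg : (0:ℝ) ≤ L) hcont
    have humem : u ∈ Icc (dist (c 0) y) (dist (c L) y) := by
      rw [hD0, hDL]; exact ⟨hzu, huT⟩
    obtain ⟨t, htmem, htu⟩ := hivt humem
    have hct : c t = γ u := hsingle u hNu (c t) htu
    have ht1 : dist z (γ u) = t - 0 := by
      have h2 := hcG.dist_eq (le_refl (0:ℝ)) htmem.1 htmem.2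
      rw [hc0, hct] at h2
      exact h2
    have ht2 : dist (γ u) (γ T) = L - t := by
      have h2 := hcG.dist_eq htmem.1 htmem.2 le_rfl
      rw [hct, hcL] at h2
      exact h2
    have ht3 : dist (γ u) (γ T) = T - u := by
      rw [hγiso u T hu0 hT0, abs_sub_comm, abs_of_nonneg (by linarith)]
    rw [ht3] at ht2
    exact ⟨t, htmem.1, htmem.2, hct, by linarith, by linarith⟩
  have L1' : ∀ z : Y, ∀ T u : ℝ, N₀ ≤ u → dist z y ≤ u → u ≤ T →
      dist z (γ T) = dist z (γ u) + (T - u) := by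
    intro z T u h1 h2 h3
    obtain ⟨c, hc0, hcL, hcG⟩ := hgeo z (γ T)
    obtain ⟨t, -, -, -, ht1, ht2⟩ := L1 z T u h1 h2 h3 c hc0 hcL hcG
    linarith
  -- the Busemann-type function
  set φ : Y → ℝ := fun z => (max N₀ (dist z y) + 1) - dist z (γ (max N₀ (dist z y) + 1))
    with hφdef
  have hφT : ∀ z : Y, ∀ T : ℝ, max N₀ (dist z y) + 1 ≤ T → φ z = T - dist z (γ T) := by
    intro z T hT
    set T₀ := max N₀ (dist z y) + 1 with hT₀
    rcases eq_or_lt_of_le hT with h | h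
    · rw [hφdef, ← h]
    · have := L1' z T T₀ (by have := le_max_left N₀ (dist z y); linarith)
        (by have := le_max_right N₀ (dist z y); linarith) h.le
      rw [hφdef]
      simp only [← hT₀]
      rw [this]
      ring
  -- alignment (one-sided)
  have key : ∀ z w : Y, ∀ T₁ : ℝ, max N₀ (max (dist z y) (dist w y)) + 1 = T₁ →
      dist w (γ (T₁ + 1)) ≤ dist z (γ (T₁ + 1)) →
      dist z w = dist z (γ (T₁ + 1)) - dist w (γ (T₁ + 1)) := by
    intro z w T₁ hT₁ hβα
    set T := T₁ + 1 with hTdef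
    have hN₀T₁ : N₀ + 1 ≤ T₁ := by
      rw [← hT₁]; have := le_max_left N₀ (max (dist z y) (dist w y)); linarith
    have hzT₁ : dist z y + 1 ≤ T₁ := by
      rw [← hT₁]
      have := (le_max_left (dist z y) (dist w y)).trans (le_max_right N₀ _); linarith
    have hwT₁ : dist w y + 1 ≤ T₁ := by
      rw [← hT₁]
      have := (le_max_right (dist z y) (dist w y)).trans (le_max_right N₀ _); linarith
    obtain ⟨α, hα0, hαL, hαG⟩ := hgeo z (γ T)
    obtain ⟨β, hβ0, hβL, hβG⟩ := hgeo w (γ T)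
    set Lα := dist z (γ T) with hLα
    set Lβ := dist w (γ T) with hLβ
    have hLβ2 : 2 ≤ Lβ := by
      have h1 : dist (γ T) y ≤ dist w (γ T) + dist w y := dist_triangle_left _ _ _
      rw [hγy T (by linarith)] at h1
      linarith
    have hLα2 : 2 ≤ Lα := by
      have h1 : dist (γ T) y ≤ dist z (γ T) + dist z y := dist_triangle_left _ _ _
      rw [hγy T (by linarith)] at h1
      linarith
    -- reversed geodesics agree with γ (T - ·) on [0, T - T₁]
    have tail : ∀ (c : ℝ → Y) (p : Y) (L : ℝ), L = dist p (γ T) → dist p y ≤ T₁ →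
        c 0 = p → c L = γ T → IsG c L → ∀ s ∈ Icc (0:ℝ) 1, c (L - s) = γ (T - s) := by
      intro c p L hLd hpT₁ hc0 hcL hcG s hs
      obtain ⟨t, ht0, htL, hct, ht1, ht2⟩ :=
        L1 p T (T - s) (by linarith [hs.2]) (by linarith [hs.2]) (by linarith [hs.1])
        c hc0 (by rw [← hLd]; exact hcL) (by rw [← hLd]; exact hcG)
      have : t = L - s := by rw [hLd]; linarith
      rw [← this]
      exact hct
    have hagree : ∀ t ∈ Icc (0:ℝ) Lβ, α (Lα - t) = β (Lβ - t) := by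
      refine hnb Lβ (fun t => α (Lα - t)) (fun t => β (Lβ - t))
        ((hαG.rev).mono hβα) (hβG.rev) ⟨1, one_pos, fun t ht => ?_⟩
      show α (Lα - t) = β (Lβ - t)
      have h1 : α (Lα - t) = γ (T - t) := tail α z Lα rfl (by linarith) hα0 hαL hαG t ht
      have h2 : β (Lβ - t) = γ (T - t) := tail β w Lβ rfl (by linarith) hβ0 hβL hβG t ht
      rw [h1, h2]
    have hw : α (Lα - Lβ) = w := by
      have := hagree Lβ ⟨by linarith, le_rfl⟩
      simp only [sub_self] at this
      rw [this, hβ0]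
    have : dist z w = (Lα - Lβ) - 0 := by
      rw [← hα0, ← hw]
      exact hαG.dist_eq le_rfl (by linarith) (by linarith)
    linarith
  refine ⟨φ, ?_, ?_, ?_⟩
  · -- isometry
    intro z w
    set T₁ := max N₀ (max (dist z y) (dist w y)) + 1 with hT₁
    set T := T₁ + 1 with hT
    have hmz : max N₀ (dist z y) + 1 ≤ T := by
      rcases max_cases N₀ (dist z y) with ⟨h1, h2⟩ | ⟨h1, h2⟩ <;>
      · rw [h1, hT, hT₁]
        rcases max_cases N₀ (max (dist z y) (dist w y)) with ⟨h3, h4⟩ | ⟨h3, h4⟩ <;>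
          [skip; skip] <;> rw [h3] <;>
          [linarith [le_max_left (dist z y) (dist w y)];
           linarith [le_max_left (dist z y) (dist w y)]]
    have hmw : max N₀ (dist w y) + 1 ≤ T := by
      rcases max_cases N₀ (dist w y) with ⟨h1, h2⟩ | ⟨h1, h2⟩ <;>
      · rw [h1, hT, hT₁]
        rcases max_cases N₀ (max (dist z y) (dist w y)) with ⟨h3, h4⟩ | ⟨h3, h4⟩ <;>
          [skip; skip] <;> rw [h3] <;>
          [linarith [le_max_right (dist z y) (dist w y)];
           linarith [le_max_right (dist z y) (dist w y)]]
    rw [Real.dist_eq, hφT z T hmz, hφT w T hmw]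
    rcases le_total (dist w (γ T)) (dist z (γ T)) with hc | hc
    · have := key z w T₁ rfl hc
      rw [this]
      rw [abs_of_nonpos (by linarith)]
      ring
    · have := key w z T₁ (by rw [hT₁, max_comm (dist z y)]) hc
      rw [dist_comm z w, this]
      rw [abs_of_nonneg (by linarith)]
      ring
  · -- φ y = 0
    have h1 : dist y (γ (max N₀ (dist y y) + 1)) = max N₀ (dist y y) + 1 := by
      rw [dist_comm]
      exact hγy _ (by have := le_max_left N₀ (dist y y); linarith)
    show (max N₀ (dist y y) + 1) - dist y (γ (max N₀ (dist y y) + 1)) = 0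
    rw [h1]
    ring
  · -- φ (γ s) = s
    intro s hs
    have hd : dist (γ s) y = s := hγy s hs
    have hTs : max N₀ (dist (γ s) y) + 1 ≤ max N₀ s + 1 := by rw [hd]
    have h2 := hφT (γ s) (max N₀ s + 1) hTs
    rw [h2]
    have h3 : dist (γ s) (γ (max N₀ s + 1)) = (max N₀ s + 1) - s := by
      rw [hγiso s _ hs (by linarith [le_max_left N₀ s]),
        abs_of_nonpos (by linarith [le_max_right N₀ s])]
      ring
    rw [h3]
    ring

end

section
variable (y : Y)
variable (hgeo : ∀ x z : Y, ∃ c : ℝ → Y, c 0 = x ∧ c (dist x z) = z ∧ IsG c (dist x z))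
variable {S : Set Y} (hSfin : S.Finite) {N₀ : ℝ} (hN₀ : 0 < N₀)
variable (g : Y → ℝ → Y)
variable (hg0 : ∀ x ∈ S, g x 0 = y)
variable (hgiso : ∀ x ∈ S, ∀ s t : ℝ, 0 ≤ s → 0 ≤ t → dist (g x s) (g x t) = |s - t|)
variable (hsep : ∀ x ∈ S, ∀ x' ∈ S, ∀ u, N₀ ≤ u → g x u = g x' u → x = x')
variable (hdesc : ∀ u, N₀ ≤ u → ∀ w : Y, dist w y = u → ∃ x ∈ S, w = g x u)

include hgeo hSfin hN₀ hg0 hgiso hsep hdesc in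
theorem claim1 {x₁ x₂ : Y} (hx₁ : x₁ ∈ S) (hx₂ : x₂ ∈ S) (hne : x₁ ≠ x₂)
    {R : ℝ} (hR : N₀ + 1 < R) :
    dist (g x₁ R) (g x₂ R) = 2 * (R - (N₀ + 1)) + dist (g x₁ (N₀ + 1)) (g x₂ (N₀ + 1)) := by
  classical
  set r : ℝ := N₀ + 1 with hr
  have hray : ∀ x ∈ S, ∀ u : ℝ, 0 ≤ u → dist (g x u) y = u := by
    intro x hx u hu
    have := hgiso x hx u 0 hu le_rfl
    rw [hg0 x hx] at this
    rw [this, sub_zero, abs_of_nonneg hu]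
  have hgIsG : ∀ x ∈ S, ∀ T : ℝ, IsG (g x) T := fun x hx T s hs t ht =>
    hgiso x hx s t hs.1 ht.1
  have hgcont : ∀ x ∈ S, ContinuousOn (g x) (Ici 0) := by
    intro x hx
    have : LipschitzOnWith 1 (g x) (Ici 0) := by
      intro s hs t ht
      rw [edist_dist, edist_dist, hgiso x hx s t hs ht]
      simp [Real.dist_eq]
    exact this.continuousOn
  -- the generic "interval" lemma, for a geodesic σ of length L
  have main : ∀ (σ : ℝ → Y) (L : ℝ) (a b : Y), a ∈ S → b ∈ S → a ≠ b →
      IsG σ L → 0 ≤ L → σ 0 = g a R → σ L = g b R →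
      (∃ t', t' ∈ Icc (0:ℝ) L ∧ dist (σ t') y ≤ N₀) ∧
      ∃ t₁, t₁ ∈ Icc (0:ℝ) L ∧ σ t₁ = g a r ∧ t₁ = R - r ∧
        ∀ t', t' ∈ Icc (0:ℝ) L → dist (σ t') y ≤ N₀ → t₁ ≤ t' := by
    intro σ L a b ha hb hab hσG hL0 hσ0 hσL
    set D : ℝ → ℝ := fun t => dist (σ t) y with hD
    have hDcont : ContinuousOn D (Icc 0 L) :=
      continuous_dist.comp_continuousOn (hσG.continuousOn.prodMk continuousOn_const)
    have hDnn : ∀ t, 0 ≤ D t := fun t => dist_nonneg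
    have hD0 : D 0 = R := by rw [hD]; simp only [hσ0]; exact hray a ha R (by linarith)
    -- membership in the A-sets
    set A : Y → Set ℝ := fun x => {t ∈ Icc (0:ℝ) L | σ t = g x (D t)} with hA
    have hAclosed : ∀ x ∈ S, IsClosed (A x) := by
      intro x hx
      have hF : ContinuousOn (fun t => dist (σ t) (g x (D t))) (Icc 0 L) :=
        continuous_dist.comp_continuousOn
          (ContinuousOn.prodMk hσG.continuousOn
            ((hgcont x hx).comp hDcont (fun t _ => hDnn t)))
      have : A x = Icc 0 L ∩ (fun t => dist (σ t) (g x (D t))) ⁻¹' {0} := by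
        ext t
        simp only [hA, mem_sep_iff, mem_inter_iff, mem_preimage, mem_singleton_iff,
          dist_eq_zero]
      rw [this]
      exact hF.preimage_isClosed_of_isClosed isClosed_Icc isClosed_singleton
    have hcover : ∀ t ∈ Icc (0:ℝ) L, N₀ ≤ D t → ∃ x ∈ S, t ∈ A x := by
      intro t ht hDt
      obtain ⟨x, hx, hxe⟩ := hdesc (D t) hDt (σ t) rfl
      exact ⟨x, hx, ht, hxe⟩
    have hdisjA : ∀ x ∈ S, ∀ x' ∈ S, ∀ t, t ∈ A x → t ∈ A x' → N₀ ≤ D t → x = x' := by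
      intro x hx x' hx' t h1 h2 hDt
      exact hsep x hx x' hx' (D t) hDt (by rw [← h1.2, ← h2.2])
    have hinterval : ∀ x ∈ S, ∀ t₀ t₁ : ℝ, 0 ≤ t₀ → t₀ ≤ t₁ → t₁ ≤ L → t₀ ∈ A x →
        (∀ t, t₀ ≤ t → t ≤ t₁ → N₀ < D t) → t₁ ∈ A x := by
      intro x hx t₀ t₁ h0 h01 h1L ht₀ hDgt
      by_contra ht₁
      set E : Set ℝ := A x ∩ Icc t₀ t₁ with hE
      have hEclosed : IsClosed E := (hAclosed x hx).inter isClosed_Icc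
      have hEne : E.Nonempty := ⟨t₀, ht₀, le_rfl, h01⟩
      have hEbdd : BddAbove E := BddAbove.inter_of_right (bddAbove_Icc)
      set u := sSup E with hu
      have huE : u ∈ E := hEclosed.csSup_mem hEne hEbdd
      have hut₁ : u < t₁ := by
        rcases lt_or_eq_of_le huE.2.2 with h | h
        · exact h
        · exact absurd (h ▸ huE.1) ht₁
      set B : Set ℝ := ⋃ x' ∈ S \ {x}, A x' with hB
      have hBclosed : IsClosed B :=
        (hSfin.diff (t := {x})).isClosed_biUnion (fun x' hx' => hAclosed x' hx'.1)
      have hsub : Ioc u t₁ ⊆ B := by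
        intro t ht
        have htIcc : t ∈ Icc (0:ℝ) L := ⟨h0.trans (huE.2.1.trans ht.1.le), ht.2.trans h1L⟩
        have ht₀t : t₀ ≤ t := huE.2.1.trans ht.1.le
        obtain ⟨x', hx', htx'⟩ := hcover t htIcc (hDgt t ht₀t ht.2).le
        have hxx' : x' ≠ x := by
          intro h
          subst h
          have : t ∈ E := ⟨htx', ht₀t, ht.2⟩
          exact absurd (le_csSup hEbdd this) (not_le.2 ht.1)
        exact mem_biUnion ⟨hx', hxx'⟩ htx'
      have huB : u ∈ B := by
        have h1 : u ∈ closure (Ioc u t₁) := by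
          rw [closure_Ioc hut₁.ne]
          exact ⟨le_rfl, hut₁.le⟩
        have := closure_mono hsub h1
        rwa [hBclosed.closure_eq] at this
      simp only [hB, mem_iUnion, exists_prop] at huB
      obtain ⟨x', hx'mem, hux'⟩ := huB
      have hle : N₀ ≤ D u := (hDgt u huE.2.1 huE.2.2).le
      exact hx'mem.2 (mem_singleton_iff.2 (hdisjA x' hx'mem.1 x hx u hux' huE.1 hle))
    have hD0R : D 0 = R := hD0
    have hDL : D L = R := by
      rw [hD]; simp only [hσL]; exact hray b hb R (by linarith)
    have h0A : (0:ℝ) ∈ A a := by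
      refine ⟨⟨le_rfl, hL0⟩, ?_⟩
      rw [hD0, hσ0]
    -- there is a point close to y
    have hnear : ∃ t', t' ∈ Icc (0:ℝ) L ∧ D t' ≤ N₀ := by
      by_contra hco
      push_neg at hco
      have hLA : L ∈ A a := by
        refine hinterval a ha 0 L le_rfl hL0 le_rfl h0A ?_
        intro t h0t htL
        exact hco t ⟨h0t, htL⟩
      have : g b R = g a R := by
        rw [← hσL, hLA.2, hDL]
      exact hab (hsep a ha b hb R (by linarith) (by rw [this]))
    obtain ⟨t', ht', hDt'⟩ := hnear
    refine ⟨⟨t', ht', hDt'⟩, ?_⟩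
    -- first crossing of level r
    have hC : ∃ t ∈ Icc (0:ℝ) L, D t = r := by
      have h1 : ContinuousOn D (Icc 0 t') := hDcont.mono (Icc_subset_Icc le_rfl ht'.2)
      have h2 := intermediate_value_Icc' ht'.1 h1
      have h3 : r ∈ Icc (D t') (D 0) := by
        rw [hD0]
        exact ⟨by linarith, hR.le⟩
      obtain ⟨t, htm, htr⟩ := h2 h3
      exact ⟨t, ⟨htm.1, htm.2.trans ht'.2⟩, htr⟩
    set C : Set ℝ := {t ∈ Icc (0:ℝ) L | D t = r} with hCdef
    have hCclosed : IsClosed C := by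
      have : C = Icc 0 L ∩ D ⁻¹' {r} := by
        ext t
        simp only [hCdef, mem_sep_iff, mem_inter_iff, mem_preimage, mem_singleton_iff]
      rw [this]
      exact hDcont.preimage_isClosed_of_isClosed isClosed_Icc isClosed_singleton
    have hCne : C.Nonempty := by
      obtain ⟨t, h1, h2⟩ := hC
      exact ⟨t, ⟨h1, h2⟩⟩
    set t₁ : ℝ := sInf C with ht₁def
    have ht₁C : t₁ ∈ C := hCclosed.csInf_mem hCne (BddBelow.inter_of_left bddBelow_Icc)
    have hDt₁ : D t₁ = r := ht₁C.2
    have hbefore : ∀ t, 0 ≤ t → t < t₁ → r < D t := by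
      intro t h0 htt₁
      have htL : t ≤ L := htt₁.le.trans ht₁C.1.2
      by_contra hc
      push_neg at hc
      rcases eq_or_lt_of_le hc with h | h
      · exact absurd (csInf_le (BddBelow.inter_of_left bddBelow_Icc)
          (⟨⟨h0, htL⟩, h⟩ : t ∈ C)) (not_le.2 htt₁)
      · have h1 : ContinuousOn D (Icc 0 t) := hDcont.mono (Icc_subset_Icc le_rfl htL)
        have h2 := intermediate_value_Icc' h0 h1
        have h3 : r ∈ Icc (D t) (D 0) := by rw [hD0]; exact ⟨h.le, hR.le⟩
        obtain ⟨s, hsm, hsr⟩ := h2 h3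
        have : t₁ ≤ s := csInf_le (BddBelow.inter_of_left bddBelow_Icc)
          (⟨⟨hsm.1, hsm.2.trans htL⟩, hsr⟩ : s ∈ C)
        linarith [hsm.2]
    have ht₁A : t₁ ∈ A a := by
      refine hinterval a ha 0 t₁ le_rfl ht₁C.1.1 ht₁C.1.2 h0A ?_
      intro t h0t htt₁
      rcases eq_or_lt_of_le htt₁ with h | h
      · rw [h, hDt₁]; linarith
      · have := hbefore t h0t h
        linarith
    have hσt₁ : σ t₁ = g a r := by
      rw [ht₁A.2, hDt₁]
    have ht₁val : t₁ = R - r := by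
      have h1 : dist (σ 0) (σ t₁) = t₁ - 0 := hσG.dist_eq le_rfl ht₁C.1.1 ht₁C.1.2
      rw [hσ0, hσt₁] at h1
      have h2 : dist (g a R) (g a r) = |R - r| := hgiso a ha R r (by linarith) (by linarith)
      rw [h2, abs_of_nonneg (by linarith)] at h1
      linarith
    refine ⟨t₁, ht₁C.1, hσt₁, ht₁val, ?_⟩
    intro s hs hDs
    by_contra hc
    push_neg at hc
    have := hbefore s hs.1 hc
    linarith
  -- apply to a geodesic between the two ray points and its reverse
  obtain ⟨σ, hσ0, hσL, hσG⟩ := hgeo (g x₁ R) (g x₂ R)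
  set L : ℝ := dist (g x₁ R) (g x₂ R) with hLdef
  have hL0 : 0 ≤ L := dist_nonneg
  obtain ⟨⟨t', ht'mem, ht'near⟩, t₁, ht₁mem, hσt₁, ht₁val, ht₁min⟩ :=
    main σ L x₁ x₂ hx₁ hx₂ hne hσG hL0 hσ0 hσL
  have hσ'0 : σ (L - 0) = g x₂ R := by rw [sub_zero]; exact hσL
  have hσ'L : σ (L - L) = g x₁ R := by rw [sub_self]; exact hσ0
  obtain ⟨-, t₂', ht₂'mem, hσt₂', ht₂'val, ht₂'min⟩ :=
    main (fun t => σ (L - t)) L x₂ x₁ hx₂ hx₁ hne.symm (hσG.rev) hL0 hσ'0 hσ'L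
  set t₂ : ℝ := L - t₂' with ht₂def
  have ht₁t' : t₁ ≤ t' := ht₁min t' ht'mem ht'near
  have ht₂t' : t₂' ≤ L - t' := by
    refine ht₂'min (L - t') ⟨by linarith [ht'mem.2], by linarith [ht'mem.1]⟩ ?_
    have : L - (L - t') = t' := by ring
    rw [this]
    exact ht'near
  have ht₁₂ : t₁ ≤ t₂ := by rw [ht₂def]; linarith
  have hd12 : dist (σ t₁) (σ t₂) = t₂ - t₁ :=
    hσG.dist_eq ht₁mem.1 ht₁₂ (by rw [ht₂def]; linarith [ht₂'mem.1])
  have hσt₂ : σ t₂ = g x₂ r := hσt₂'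
  rw [hσt₁, hσt₂] at hd12
  have : L = 2 * (R - r) + dist (g x₁ r) (g x₂ r) := by
    rw [hd12, ht₂def, ht₁val, ht₂'val]
    ring
  exact this

include hgeo hSfin hN₀ hg0 hgiso hsep hdesc in
theorem exists_line {x₁ x₂ : Y} (hx₁ : x₁ ∈ S) (hx₂ : x₂ ∈ S) (hne : x₁ ≠ x₂) :
    ∃ c : ℝ → Y, ∀ s t : ℝ, dist (c s) (c t) = |s - t| := by
  classical
  set r : ℝ := N₀ + 1 with hrdef
  have hr0 : 0 < r := by rw [hrdef]; linarith
  set δ : ℝ := dist (g x₁ r) (g x₂ r) with hδdef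
  have hδ0 : 0 ≤ δ := dist_nonneg
  set e : ℝ := 2 * r - δ with hedef
  have formula : ∀ u v : ℝ, r ≤ u → r ≤ v → dist (g x₁ u) (g x₂ v) = u + v - e := by
    intro u v hu hv
    have hub : dist (g x₁ u) (g x₂ v) ≤ u + v - e := by
      have h4 := dist_triangle4 (g x₁ u) (g x₁ r) (g x₂ r) (g x₂ v)
      rw [hgiso x₁ hx₁ u r (by linarith) hr0.le,
        hgiso x₂ hx₂ r v hr0.le (by linarith), ← hδdef,
        abs_of_nonneg (by linarith), abs_of_nonpos (by linarith)] at h4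
      rw [hedef]
      linarith
    have hlb : u + v - e ≤ dist (g x₁ u) (g x₂ v) := by
      set R : ℝ := max u v + 1 with hRdef
      have hRu : u ≤ R := by have := le_max_left u v; linarith
      have hRv : v ≤ R := by have := le_max_right u v; linarith
      have hRr : N₀ + 1 < R := by
        have := le_max_left u v
        rw [hRdef]
        have : r ≤ max u v := le_trans hu (le_max_left u v)
        rw [hrdef] at this
        linarith
      have hcl := claim1 y hgeo hSfin hN₀ g hg0 hgiso hsep hdesc hx₁ hx₂ hne hRr
      have h4 := dist_triangle4 (g x₁ R) (g x₁ u) (g x₂ v) (g x₂ R)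
      rw [hgiso x₁ hx₁ R u (by linarith) (by linarith),
        hgiso x₂ hx₂ v R (by linarith) (by linarith),
        abs_of_nonneg (by linarith), abs_of_nonpos (by linarith)] at h4
      rw [hcl, ← hrdef, ← hδdef] at h4
      rw [hedef]
      linarith
    linarith
  obtain ⟨m, hm0, hmδ, hmG⟩ := hgeo (g x₁ r) (g x₂ r)
  rw [← hδdef] at hmδ hmG
  set ℓ : ℝ → Y := fun t => if t ≤ 0 then g x₁ (r - t) else if t ≤ δ then m t
    else g x₂ (r + t - δ) with hℓdef
  have hev1 : ∀ t : ℝ, t ≤ 0 → ℓ t = g x₁ (r - t) := by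
    intro t ht; simp only [hℓdef, if_pos ht]
  have hev2 : ∀ t : ℝ, 0 < t → t ≤ δ → ℓ t = m t := by
    intro t ht1 ht2; simp only [hℓdef, if_neg (not_le.2 ht1), if_pos ht2]
  have hev3 : ∀ t : ℝ, δ < t → ℓ t = g x₂ (r + t - δ) := by
    intro t ht
    have h0t : ¬ t ≤ 0 := not_le.2 (lt_of_le_of_lt hδ0 ht)
    simp only [hℓdef, if_neg h0t, if_neg (not_le.2 ht)]
  have key : ∀ s t : ℝ, s ≤ t → dist (ℓ s) (ℓ t) = t - s := by
    intro s t hst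
    by_cases ht0 : t ≤ 0
    · -- case 1
      rw [hev1 s (hst.trans ht0), hev1 t ht0,
        hgiso x₁ hx₁ (r - s) (r - t) (by linarith [hst.trans ht0]) (by linarith),
        abs_of_nonneg (by linarith)]
      ring
    · push_neg at ht0
      by_cases hs0 : s ≤ 0
      · by_cases htδ : t ≤ δ
        · -- case 2
          rw [hev1 s hs0, hev2 t ht0 htδ]
          have hub : dist (g x₁ (r - s)) (m t) ≤ t - s := by
            have h3 := dist_triangle (g x₁ (r - s)) (m 0) (m t)
            rw [hm0] at h3
            rw [hgiso x₁ hx₁ (r - s) r (by linarith) hr0.le,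
              abs_of_nonneg (by linarith)] at h3
            have h5 : dist (m 0) (m t) = t - 0 := hmG.dist_eq le_rfl ht0.le htδ
            rw [hm0] at h5
            have h6 := dist_triangle (g x₁ (r - s)) (g x₁ r) (m t)
            rw [hgiso x₁ hx₁ (r - s) r (by linarith) hr0.le,
              abs_of_nonneg (by linarith), h5] at h6
            linarith
          have hlb : t - s ≤ dist (g x₁ (r - s)) (m t) := by
            have hf := formula (r - s) r (by linarith) le_rfl
            have h3 := dist_triangle (g x₁ (r - s)) (m t) (g x₂ r)
            have h5 : dist (m t) (m δ) = δ - t := hmG.dist_eq ht0.le htδ le_rfl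
            rw [hmδ] at h5
            rw [hf] at h3
            rw [h5] at h3
            rw [hedef] at h3
            linarith
          linarith
        · -- case 3
          push_neg at htδ
          rw [hev1 s hs0, hev3 t htδ, formula (r - s) (r + t - δ) (by linarith) (by linarith)]
          rw [hedef]
          ring
      · push_neg at hs0
        by_cases htδ : t ≤ δ
        · -- case 4
          rw [hev2 s hs0 (hst.trans htδ), hev2 t ht0 htδ]
          exact hmG.dist_eq hs0.le hst htδ
        · push_neg at htδ
          by_cases hsδ : s ≤ δ
          · -- case 5
            rw [hev2 s hs0 hsδ, hev3 t htδ]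
            have hub : dist (m s) (g x₂ (r + t - δ)) ≤ t - s := by
              have h3 := dist_triangle (m s) (m δ) (g x₂ (r + t - δ))
              have h5 : dist (m s) (m δ) = δ - s := hmG.dist_eq hs0.le hsδ le_rfl
              rw [h5, hmδ, hgiso x₂ hx₂ r (r + t - δ) hr0.le (by linarith),
                abs_of_nonpos (by linarith)] at h3
              linarith
            have hlb : t - s ≤ dist (m s) (g x₂ (r + t - δ)) := by
              have hf := formula r (r + t - δ) le_rfl (by linarith)
              have h3 := dist_triangle (g x₁ r) (m s) (g x₂ (r + t - δ))
              have h5 : dist (g x₁ r) (m s) = s - 0 := by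
                rw [← hm0]; exact hmG.dist_eq le_rfl hs0.le hsδ
              rw [hf, h5] at h3
              rw [hedef] at h3
              linarith
            linarith
          · -- case 6
            push_neg at hsδ
            rw [hev3 s hsδ, hev3 t htδ,
              hgiso x₂ hx₂ (r + s - δ) (r + t - δ) (by linarith) (by linarith),
              abs_of_nonpos (by linarith)]
            ring
  refine ⟨ℓ, fun s t => ?_⟩
  rcases le_total s t with h | h
  · rw [key s t h, abs_of_nonpos (by linarith)]
    ring
  · rw [dist_comm, key t s h, abs_of_nonneg (by linarith)]

end

theorem split_case {N : Type} [MetricSpace N] (y : Y)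
    (hgeo : ∀ x z : Y, ∃ c : ℝ → Y, c 0 = x ∧ c (dist x z) = z ∧ IsG c (dist x z))
    {R₀ : ℝ} (hR₀ : 0 < R₀) (hfin : ({x : Y | dist x y = R₀}).Finite)
    (φ : Y → ℝ × N) (hiso : Isometry φ) (hsurj : Function.Surjective φ) :
    (∀ R > (0:ℝ), ({x : Y | dist x y = R}).encard = 2) ∧
      ∃ ψ : Y → ℝ, Isometry ψ ∧ ψ y = 0 ∧ Function.Surjective ψ := by
  classical
  have hd : ∀ z w : Y, dist (φ z) (φ w) = dist z w := fun z w => hiso.dist_eq z w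
  set t₀ : ℝ := (φ y).1 with ht₀
  set n₀ : N := (φ y).2 with hn₀
  -- N is a single point
  have hsub : ∀ n : N, n = n₀ := by
    by_contra hco
    push_neg at hco
    obtain ⟨n', hn'⟩ := hco
    obtain ⟨q', hq'⟩ := hsurj (t₀, n')
    set D' : ℝ := dist n₀ n' with hD'
    have hD'pos : 0 < D' := dist_pos.2 (Ne.symm hn')
    have hyq : dist y q' = D' := by
      calc dist y q' = dist (φ y) (φ q') := (hd y q').symm
        _ = max (dist (φ y).1 t₀) (dist (φ y).2 n') := by rw [hq']; exact Prod.dist_eq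
        _ = max (dist t₀ t₀) (dist n₀ n') := by rw [← ht₀, ← hn₀]
        _ = D' := by rw [dist_self, hD']; exact max_eq_right dist_nonneg
    obtain ⟨c, hc0, hcD, hcG⟩ := hgeo y q'
    rw [hyq] at hcD hcG
    set b : ℝ → N := fun t => (φ (c t)).2 with hbdef
    have hb0 : b 0 = n₀ := by
      show (φ (c 0)).2 = n₀
      rw [hc0]
    have hbD : b D' = n' := by
      show (φ (c D')).2 = n'
      rw [hcD, hq']
    have hble : ∀ s t : ℝ, 0 ≤ s → s ≤ t → t ≤ D' → dist (b s) (b t) ≤ t - s := by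
      intro s t h1 h2 h3
      have h4 : dist (b s) (b t) ≤ dist (φ (c s)) (φ (c t)) := le_max_right _ _
      rw [hd, hcG.dist_eq h1 h2 h3] at h4
      exact h4
    have hbdist : ∀ u : ℝ, 0 ≤ u → u ≤ D' → dist (b 0) (b u) = u := by
      intro u h1 h2
      have h3 := hble 0 u le_rfl h1 h2
      have h4 := hble u D' h1 h2 le_rfl
      have h5 : dist (b 0) (b D') = D' := by rw [hb0, hbD, hD']
      have h6 := dist_triangle (b 0) (b u) (b D')
      rw [h5] at h6
      linarith
    set ε : ℝ := min D' R₀ with hεdef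
    have hε : 0 < ε := lt_min hD'pos hR₀
    set F : ℝ → Y := fun u => Classical.choose (hsurj (t₀ + R₀, b u)) with hFdef
    have hF : ∀ u, φ (F u) = (t₀ + R₀, b u) := fun u => Classical.choose_spec (hsurj _)
    have hFmem : MapsTo F (Icc 0 ε) {x : Y | dist x y = R₀} := by
      intro u hu
      have h1 : dist (F u) y = max (dist (t₀ + R₀) t₀) (dist (b u) n₀) := by
        calc dist (F u) y = dist (φ (F u)) (φ y) := (hd _ _).symm
          _ = max (dist (t₀ + R₀) (φ y).1) (dist (b u) (φ y).2) := by rw [hF u]; exact Prod.dist_eq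
          _ = max (dist (t₀ + R₀) t₀) (dist (b u) n₀) := by rw [← ht₀, ← hn₀]
      have h2 : dist (t₀ + R₀) t₀ = R₀ := by
        rw [Real.dist_eq, add_sub_cancel_left, abs_of_nonneg hR₀.le]
      have h3 : dist (b u) n₀ ≤ R₀ := by
        rw [← hb0, dist_comm, hbdist u hu.1 (hu.2.trans (min_le_left _ _))]
        exact hu.2.trans (min_le_right _ _)
      show dist (F u) y = R₀
      rw [h1, h2]
      exact max_eq_left h3
    have hFinj : InjOn F (Icc 0 ε) := by
      intro u hu v hv huv
      have h1 : φ (F u) = φ (F v) := by rw [huv]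
      rw [hF u, hF v, Prod.mk.injEq] at h1
      have h2 : dist (b 0) (b u) = dist (b 0) (b v) := by rw [h1.2]
      rw [hbdist u hu.1 (hu.2.trans (min_le_left _ _)),
        hbdist v hv.1 (hv.2.trans (min_le_left _ _))] at h2
      exact h2
    have hinf : ({x : Y | dist x y = R₀}).Infinite :=
      ((Set.infinite_image_iff hFinj).2 (Set.Icc_infinite hε)).mono hFmem.image_subset
    exact hinf hfin
  -- N is a point; project to ℝ
  set ψ : Y → ℝ := fun z => (φ z).1 - t₀ with hψdef
  have hψdist : ∀ z w : Y, dist (ψ z) (ψ w) = dist z w := by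
    intro z w
    have h1 : dist z w = max (dist (φ z).1 (φ w).1) (dist (φ z).2 (φ w).2) := by
      rw [← hd z w]; rfl
    have h2 : (φ z).2 = (φ w).2 := by rw [hsub (φ z).2, hsub (φ w).2]
    have h3 : dist (φ z).2 (φ w).2 = 0 := by rw [h2, dist_self]
    rw [h1, h3, max_eq_left dist_nonneg]
    show |((φ z).1 - t₀) - ((φ w).1 - t₀)| = _
    rw [Real.dist_eq]
    ring_nf
  have hψy : ψ y = 0 := by
    show (φ y).1 - t₀ = 0
    rw [← ht₀, sub_self]
  have hψsurj : Function.Surjective ψ := by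
    intro x
    obtain ⟨z, hz⟩ := hsurj (x + t₀, n₀)
    refine ⟨z, ?_⟩
    show (φ z).1 - t₀ = x
    rw [hz]
    show (x + t₀) - t₀ = x
    ring
  have hψinj : Function.Injective ψ := by
    intro z w h
    have : dist z w = 0 := by rw [← hψdist, h, dist_self]
    exact dist_eq_zero.1 this
  refine ⟨?_, ψ, Isometry.of_dist_eq hψdist, hψy, hψsurj⟩
  intro R hR
  obtain ⟨z₁, hz₁⟩ := hψsurj R
  obtain ⟨z₂, hz₂⟩ := hψsurj (-R)
  have hsph : {x : Y | dist x y = R} = {z₁, z₂} := by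
    ext x
    simp only [mem_setOf_eq, mem_insert_iff, mem_singleton_iff]
    constructor
    · intro hx
      have h1 : |ψ x| = R := by
        rw [← hψdist x y, hψy] at hx
        rw [← hx]
        simp [Real.dist_eq]
      rcases abs_eq (le_of_lt hR) |>.1 h1 with h | h
      · left; exact hψinj (by rw [h, hz₁])
      · right; exact hψinj (by rw [h, hz₂])
    · intro hx
      rcases hx with h | h
      · rw [h, ← hψdist z₁ y, hψy, hz₁, Real.dist_eq, sub_zero, abs_of_nonneg hR.le]
      · rw [h, ← hψdist z₂ y, hψy, hz₂, Real.dist_eq, sub_zero,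
          abs_of_nonpos (by linarith), neg_neg]
  rw [hsph]
  refine Set.encard_pair ?_
  intro h
  have h2 : ψ z₁ = ψ z₂ := by rw [h]
  rw [hz₁, hz₂] at h2
  linarith


theorem sph_two (y : Y) (ψ : Y → ℝ) (hψd : ∀ z w : Y, dist (ψ z) (ψ w) = dist z w)
    (hψy : ψ y = 0) (hsurj : Function.Surjective ψ) :
    ∀ R : ℝ, 0 < R → ({x : Y | dist x y = R}).encard = 2 := by
  have hψinj : Function.Injective ψ := by
    intro z w h
    have : dist z w = 0 := by rw [← hψd, h, dist_self]
    exact dist_eq_zero.1 this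
  intro R hR
  obtain ⟨z₁, hz₁⟩ := hsurj R
  obtain ⟨z₂, hz₂⟩ := hsurj (-R)
  have hsph : {x : Y | dist x y = R} = {z₁, z₂} := by
    ext x
    simp only [mem_setOf_eq, mem_insert_iff, mem_singleton_iff]
    constructor
    · intro hx
      have h1 : |ψ x| = R := by
        rw [← hψd x y, hψy] at hx
        rw [← hx]
        simp [Real.dist_eq]
      rcases abs_eq (le_of_lt hR) |>.1 h1 with h | h
      · left; exact hψinj (by rw [h, hz₁])
      · right; exact hψinj (by rw [h, hz₂])
    · intro hx
      rcases hx with h | h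
      · rw [h, ← hψd z₁ y, hψy, hz₁, Real.dist_eq, sub_zero, abs_of_nonneg hR.le]
      · rw [h, ← hψd z₂ y, hψy, hz₂, Real.dist_eq, sub_zero,
          abs_of_nonpos (by linarith), neg_neg]
  rw [hsph]
  refine Set.encard_pair ?_
  intro h
  have h2 : ψ z₁ = ψ z₂ := by rw [h]
  rw [hz₁, hz₂] at h2
  linarith

theorem sph_ray (y : Y) (ψ : Y → ℝ) (hψd : ∀ z w : Y, dist (ψ z) (ψ w) = dist z w)
    (hrange : range ψ = Ici 0) {a : ℝ} (hψy : ψ y = a) :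
    (∀ R : ℝ, 0 < R → R ≤ a → ({x : Y | dist x y = R}).encard = 2) ∧
    (∀ R : ℝ, a < R → ({x : Y | dist x y = R}).encard = 1) := by
  have hnn : ∀ x : Y, 0 ≤ ψ x := by
    intro x
    have : ψ x ∈ Ici (0:ℝ) := hrange ▸ mem_range_self x
    exact this
  have ha : 0 ≤ a := hψy ▸ hnn y
  have hψinj : Function.Injective ψ := by
    intro z w h
    have : dist z w = 0 := by rw [← hψd, h, dist_self]
    exact dist_eq_zero.1 this
  have hdist : ∀ x : Y, dist x y = |ψ x - a| := by
    intro x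
    rw [← hψd x y, hψy, Real.dist_eq]
  constructor
  · intro R hR hRa
    have h1 : (a + R) ∈ range ψ := hrange ▸ (by linarith : (0:ℝ) ≤ a + R)
    have h2 : (a - R) ∈ range ψ := hrange ▸ (by linarith : (0:ℝ) ≤ a - R)
    obtain ⟨z₁, hz₁⟩ := h1
    obtain ⟨z₂, hz₂⟩ := h2
    have hsph : {x : Y | dist x y = R} = {z₁, z₂} := by
      ext x
      simp only [mem_setOf_eq, mem_insert_iff, mem_singleton_iff]
      constructor
      · intro hx
        rw [hdist x] at hx
        rcases (abs_eq hR.le).1 hx with h | h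
        · left; exact hψinj (by rw [hz₁]; linarith)
        · right; exact hψinj (by rw [hz₂]; linarith)
      · intro hx
        rcases hx with h | h
        · rw [h, hdist z₁, hz₁, add_sub_cancel_left, abs_of_nonneg hR.le]
        · rw [h, hdist z₂, hz₂]
          rw [abs_of_nonpos (by linarith)]
          ring
    rw [hsph]
    refine Set.encard_pair ?_
    intro h
    have h2' : ψ z₁ = ψ z₂ := by rw [h]
    rw [hz₁, hz₂] at h2'
    linarith
  · intro R hRa
    have hR : 0 < R := lt_of_le_of_lt ha hRa
    have h1 : (a + R) ∈ range ψ := hrange ▸ (by linarith : (0:ℝ) ≤ a + R)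
    obtain ⟨z₁, hz₁⟩ := h1
    have hsph : {x : Y | dist x y = R} = {z₁} := by
      ext x
      simp only [mem_setOf_eq, mem_singleton_iff]
      constructor
      · intro hx
        rw [hdist x] at hx
        rcases (abs_eq hR.le).1 hx with h | h
        · exact hψinj (by rw [hz₁]; linarith)
        · exfalso
          have := hnn x
          linarith
      · intro hx
        rw [hx, hdist z₁, hz₁, add_sub_cancel_left, abs_of_nonneg hR.le]
    rw [hsph]
    exact Set.encard_singleton z₁

theorem range_convex (hgeo : ∀ x z : Y, ∃ c : ℝ → Y, c 0 = x ∧ c (dist x z) = z ∧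
      IsG c (dist x z))
    (φ : Y → ℝ) (hφd : ∀ z w : Y, dist (φ z) (φ w) = dist z w) :
    ∀ a ∈ range φ, ∀ b ∈ range φ, ∀ x : ℝ, a ≤ x → x ≤ b → x ∈ range φ := by
  rintro a ⟨z, rfl⟩ b ⟨w, rfl⟩ x hax hxb
  obtain ⟨c, hc0, hcL, hcG⟩ := hgeo z w
  have hL : dist z w = φ w - φ z := by
    rw [← hφd z w, Real.dist_eq, abs_of_nonpos (by linarith)]
    ring
  set p := c (x - φ z) with hp
  have hmem : x - φ z ∈ Icc 0 (dist z w) := by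
    rw [hL]
    exact ⟨by linarith, by linarith⟩
  have h1 : dist (c 0) p = (x - φ z) - 0 := hcG.dist_eq le_rfl hmem.1 hmem.2
  have h2 : dist p (c (dist z w)) = dist z w - (x - φ z) :=
    hcG.dist_eq hmem.1 hmem.2 le_rfl
  rw [hc0] at h1
  rw [hcL] at h2
  rw [← hφd z p, Real.dist_eq] at h1
  rw [← hφd p w, Real.dist_eq, hL] at h2
  refine ⟨p, ?_⟩
  have h1' : |φ z - φ p| = x - φ z := by linarith
  have h2' : |φ p - φ w| = φ w - x := by linarith
  rcases (abs_eq (by linarith : (0:ℝ) ≤ x - φ z)).1 h1' with h | h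
  · have hφp : φ p = 2 * φ z - x := by linarith
    rw [hφp] at h2'
    rcases (abs_eq (by linarith : (0:ℝ) ≤ φ w - x)).1 h2' with h' | h'
    · linarith
    · linarith
  · linarith

theorem final_one [ProperSpace Y] (y : Y)
    (hgeo : ∀ x z : Y, ∃ c : ℝ → Y, c 0 = x ∧ c (dist x z) = z ∧ IsG c (dist x z))
    (φ : Y → ℝ) (hφd : ∀ z w : Y, dist (φ z) (φ w) = dist z w)
    (hφy : φ y = 0) (hici : ∀ s : ℝ, 0 ≤ s → s ∈ range φ) :
    ((∀ R > (0:ℝ), ({x : Y | dist x y = R}).encard = 1) ∧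
      ∃ φ' : Y → ℝ, Isometry φ' ∧ φ' y = 0 ∧ Set.range φ' = Ici 0) ∨
    (∃ a > (0:ℝ),
      (∀ R ∈ Ioc (0:ℝ) a, ({x : Y | dist x y = R}).encard = 2) ∧
      (∀ R > a, ({x : Y | dist x y = R}).encard = 1) ∧
      ∃ φ' : Y → ℝ, Isometry φ' ∧ φ' y = a ∧ Set.range φ' = Ici 0) ∨
    ((∀ R > (0:ℝ), ({x : Y | dist x y = R}).encard = 2) ∧
      ∃ φ' : Y → ℝ, Isometry φ' ∧ φ' y = 0 ∧ Function.Surjective φ') ∨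
    (∀ R > (0:ℝ), ({x : Y | dist x y = R}).encard = ⊤) := by
  classical
  have hiso : Isometry φ := Isometry.of_dist_eq hφd
  have hconv := range_convex hgeo φ hφd
  have hclosed : IsClosed (range φ) := hiso.isClosedEmbedding.isClosed_range
  have h0mem : (0:ℝ) ∈ range φ := ⟨y, hφy⟩
  by_cases hbdd : BddBelow (range φ)
  · have hcmem : sInf (range φ) ∈ range φ := hclosed.csInf_mem ⟨0, h0mem⟩ hbdd
    set c := sInf (range φ) with hcdef
    have hc0 : c ≤ 0 := csInf_le hbdd h0mem
    have hrange : range φ = Ici c := by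
      apply Subset.antisymm
      · intro x hx
        exact csInf_le hbdd hx
      · intro x hx
        rcases le_or_gt 0 x with h | h
        · exact hici x h
        · exact hconv c hcmem 0 h0mem x hx h.le
    set ψ : Y → ℝ := fun z => φ z - c with hψdef
    have hψd : ∀ z w : Y, dist (ψ z) (ψ w) = dist z w := by
      intro z w
      rw [← hφd z w]
      show |(φ z - c) - (φ w - c)| = dist (φ z) (φ w)
      rw [Real.dist_eq]
      ring_nf
    have hψy : ψ y = -c := by show φ y - c = -c; rw [hφy]; ring
    have hψrange : range ψ = Ici 0 := by
      ext x
      constructor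
      · rintro ⟨z, rfl⟩
        have h1 : φ z ∈ Ici c := hrange ▸ mem_range_self z
        show (0:ℝ) ≤ φ z - c
        have h2 : c ≤ φ z := h1
        linarith
      · intro hx
        have h3 : x + c ∈ range φ := by
          rw [hrange]
          show c ≤ x + c
          have h4 : (0:ℝ) ≤ x := hx
          linarith
        obtain ⟨z, hz⟩ := h3
        exact ⟨z, by show φ z - c = x; rw [hz]; ring⟩
    rcases eq_or_lt_of_le hc0 with hc | hc
    · left
      have hr := sph_ray y ψ hψd hψrange hψy
      constructor
      · intro R hR
        exact hr.2 R (by rw [hc, neg_zero]; exact hR)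
      · exact ⟨ψ, Isometry.of_dist_eq hψd, by rw [hψy, hc, neg_zero], hψrange⟩
    · right; left
      have hr := sph_ray y ψ hψd hψrange hψy
      refine ⟨-c, by linarith, ?_, ?_, ψ, Isometry.of_dist_eq hψd, hψy, hψrange⟩
      · intro R hR
        exact hr.1 R hR.1 hR.2
      · intro R hR
        exact hr.2 R hR
  · have hsurj : Function.Surjective φ := by
      intro x
      rcases le_or_gt 0 x with h | h
      · exact hici x h
      · obtain ⟨b, hbmem, hbx⟩ := not_bddBelow_iff.1 hbdd x
        exact hconv b hbmem 0 h0mem x hbx.le h.le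
    right; right; left
    exact ⟨sph_two y φ hφd hφy hsurj, φ, hiso, hφy, hsurj⟩


end Stmt15


theorem stmt15 {Y : Type*} [MetricSpace Y] [ProperSpace Y] (y : Y)
    (hgeo : ∀ x z : Y, ∃ c : ℝ → Y, c 0 = x ∧ c (dist x z) = z ∧
      ∀ s ∈ Icc (0:ℝ) (dist x z), ∀ t ∈ Icc (0:ℝ) (dist x z),
        dist (c s) (c t) = |s - t|)
    (hnb : ∀ (T : ℝ) (c₁ c₂ : ℝ → Y),
      (∀ s ∈ Icc (0:ℝ) T, ∀ t ∈ Icc (0:ℝ) T, dist (c₁ s) (c₁ t) = |s - t|) →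
      (∀ s ∈ Icc (0:ℝ) T, ∀ t ∈ Icc (0:ℝ) T, dist (c₂ s) (c₂ t) = |s - t|) →
      (∃ ε > (0:ℝ), ∀ t ∈ Icc (0:ℝ) ε, c₁ t = c₂ t) →
      ∀ t ∈ Icc (0:ℝ) T, c₁ t = c₂ t)
    (hnc : ¬ CompactSpace Y)
    (hsplit : (∃ c : ℝ → Y, ∀ s t : ℝ, dist (c s) (c t) = |s - t|) →
      ∃ (N : Type) (_ : MetricSpace N) (φ : Y → ℝ × N),
        Isometry φ ∧ Function.Surjective φ) :
    ((∀ R > (0:ℝ), ({x : Y | dist x y = R}).encard = 1) ∧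
      ∃ φ : Y → ℝ, Isometry φ ∧ φ y = 0 ∧ Set.range φ = Ici 0) ∨
    (∃ a > (0:ℝ),
      (∀ R ∈ Ioc (0:ℝ) a, ({x : Y | dist x y = R}).encard = 2) ∧
      (∀ R > a, ({x : Y | dist x y = R}).encard = 1) ∧
      ∃ φ : Y → ℝ, Isometry φ ∧ φ y = a ∧ Set.range φ = Ici 0) ∨
    ((∀ R > (0:ℝ), ({x : Y | dist x y = R}).encard = 2) ∧
      ∃ φ : Y → ℝ, Isometry φ ∧ φ y = 0 ∧ Function.Surjective φ) ∨
    (∀ R > (0:ℝ), ({x : Y | dist x y = R}).encard = ⊤) := by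
  classical
  by_cases hall : ∀ R > (0:ℝ), ({x : Y | dist x y = R}).encard = ⊤
  · exact Or.inr (Or.inr (Or.inr hall))
  · push_neg at hall
    obtain ⟨R₀, hR₀pos, hR₀top⟩ := hall
    have hfin : ({x : Y | dist x y = R₀}).Finite := Set.encard_ne_top_iff.1 hR₀top
    have hgeo' : ∀ x z : Y, ∃ c : ℝ → Y, c 0 = x ∧ c (dist x z) = z ∧
        Stmt15.IsG c (dist x z) := hgeo
    have hnb' : ∀ (T : ℝ) (c₁ c₂ : ℝ → Y), Stmt15.IsG c₁ T → Stmt15.IsG c₂ T →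
        (∃ ε > (0:ℝ), ∀ t ∈ Icc (0:ℝ) ε, c₁ t = c₂ t) →
        ∀ t ∈ Icc (0:ℝ) T, c₁ t = c₂ t := hnb
    obtain ⟨N₀, k, g, hN₀R, hk1, hSfin, hconst, hg0, hgN, hgiso, hsep, hdesc⟩ :=
      Stmt15.exists_structure y hgeo' hnb' hnc hR₀pos hfin
    have hN₀pos : 0 < N₀ := lt_of_lt_of_le hR₀pos hN₀R
    rcases eq_or_lt_of_le hk1 with hk | hk
    · obtain ⟨x₀, hx₀eq⟩ := Set.ncard_eq_one.1
        (by rw [(hconst N₀ le_rfl).2, ← hk] : (Stmt15.sph y N₀).ncard = 1)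
      have hx₀ : x₀ ∈ Stmt15.sph y N₀ := by rw [hx₀eq]; exact mem_singleton _
      have hsingle : ∀ u, N₀ ≤ u → ∀ w : Y, dist w y = u → w = g x₀ u := by
        intro u hu w hw
        obtain ⟨x, hx, hxe⟩ := hdesc u hu w hw
        rw [hx₀eq, mem_singleton_iff] at hx
        rw [hxe, hx]
      obtain ⟨φ, hφd, hφy, hφγ⟩ := Stmt15.branch_one y hgeo' hnb' hN₀pos (g x₀)
        (hg0 x₀ hx₀) (hgiso x₀ hx₀) hsingle
      exact Stmt15.final_one y hgeo' φ hφd hφy (fun s hs => ⟨g x₀ s, hφγ s hs⟩)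
    · obtain ⟨x₁, x₂, hx₁, hx₂, hne⟩ := (Set.one_lt_ncard_iff hSfin).1
        (by rw [(hconst N₀ le_rfl).2]; exact hk)
      have hline := Stmt15.exists_line y hgeo' hSfin hN₀pos g hg0 hgiso hsep hdesc hx₁ hx₂ hne
      obtain ⟨N, instN, φ, hφiso, hφsurj⟩ := hsplit hline
      have hsc := @Stmt15.split_case Y _ N instN y hgeo' R₀ hR₀pos hfin φ hφiso hφsurj
      exact Or.inr (Or.inr (Or.inl hsc))
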